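/- Let H be a coFrobenius Hopf algebra with integral φ and Nakayama automorphism N defined by φ(xy) = φ(y N(x)). Then N is comultiplicative (a coalgebra morphism) if and only if the modular function α = ε∘N equals the counit ε, which holds if and only if N = S⁻². -/

import Mathlib

open TensorProduct Coalgebra HopfAlgebra

variable {H : Type*} [Ring H] [HopfAlgebra ℂ H]

/-- `φ` is a right integral: `Σ φ(x₁) x₂ = φ(x) 1`. -/
def IsRightIntegral (φ : H →ₗ[ℂ] ℂ) : Prop :=
  ∀ x : H,
    TensorProduct.lid ℂ H ((LinearMap.rTensor H φ) (Coalgebra.comul (R := ℂ) x)) = φ x • 1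

/-- `lid` commutes with `lTensor`. -/
lemma lid_lTensor_aux (f : H →ₗ[ℂ] H) (t : ℂ ⊗[ℂ] H) :
    TensorProduct.lid ℂ H (LinearMap.lTensor ℂ f t) = f (TensorProduct.lid ℂ H t) := by
  induction t using TensorProduct.induction_on with
  | zero => simp
  | tmul a b => simp
  | add x y hx hy => simp [hx, hy]

/-- Counit axiom composed with a map on the second leg. -/
lemma counit_comul_aux (f : H →ₗ[ℂ] H) (x : H) :
    TensorProduct.lid ℂ H
      ((LinearMap.rTensor H (Coalgebra.counit (R := ℂ)))
        ((LinearMap.lTensor H f) (Coalgebra.comul (R := ℂ) x))) = f x := by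
  have h : (LinearMap.rTensor H (Coalgebra.counit (R := ℂ))) ∘ₗ (LinearMap.lTensor H f)
      = (LinearMap.lTensor ℂ f) ∘ₗ (LinearMap.rTensor H (Coalgebra.counit (R := ℂ))) := by
    rw [LinearMap.rTensor_comp_lTensor, LinearMap.lTensor_comp_rTensor]
  have := LinearMap.congr_fun h (Coalgebra.comul (R := ℂ) x)
  simp only [LinearMap.comp_apply] at this
  rw [this, Coalgebra.rTensor_counit_comul, LinearMap.lTensor_tmul]
  simp

/-- Counit of `lid ∘ rTensor g ∘ comul` is `g`. -/
lemma counit_rTensor_aux (g : H →ₗ[ℂ] ℂ) (x : H) :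
    Coalgebra.counit (R := ℂ)
      (TensorProduct.lid ℂ H ((LinearMap.rTensor H g) (Coalgebra.comul (R := ℂ) x))) = g x := by
  have h : ∀ t : H ⊗[ℂ] H,
      Coalgebra.counit (R := ℂ) (TensorProduct.lid ℂ H (LinearMap.rTensor H g t))
        = g (TensorProduct.rid ℂ H (LinearMap.lTensor H (Coalgebra.counit (R := ℂ)) t)) := by
    intro t
    induction t using TensorProduct.induction_on with
    | zero => simp
    | tmul a b =>
        simp only [LinearMap.rTensor_tmul, LinearMap.lTensor_tmul, lid_tmul, rid_tmul,
          map_smul, smul_eq_mul]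
        ring
    | add x y hx hy => simp [hx, hy]
  rw [h, Coalgebra.lTensor_counit_comul]
  simp

/-- for a coFrobenius Hopf algebra with Nakayama automorphism `N`
(`φ(xy) = φ(y N(x))`), `N` is comultiplicative iff the modular function `α = ε∘N`
equals the counit, iff `N = S⁻²`. -/
theorem nakayama_comultiplicative_iff
    (φ : H →ₗ[ℂ] ℂ) (hr : IsRightIntegral φ) (hφ : φ ≠ 0)
    (S' : H →ₗ[ℂ] H)
    (hS'l : ∀ x : H, S' (antipode (R := ℂ) x) = x)
    (hS'r : ∀ x : H, antipode (R := ℂ) (S' x) = x)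
    (N : H →ₗ[ℂ] H) (hNbij : Function.Bijective N)
    (hNmul : ∀ x y : H, N (x * y) = N x * N y) (hNone : N 1 = 1)
    (hNak : ∀ x y : H, φ (x * y) = φ (y * N x))
    (hNformula : ∀ x : H, N x =
      TensorProduct.lid ℂ H
        ((LinearMap.rTensor H ((Coalgebra.counit (R := ℂ)) ∘ₗ N))
          ((LinearMap.lTensor H (S' ∘ₗ S')) (Coalgebra.comul (R := ℂ) x))))
    (hΔN : ∀ x : H, Coalgebra.comul (R := ℂ) (N x) =
      (TensorProduct.map N (S' ∘ₗ S')) (Coalgebra.comul (R := ℂ) x)) :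
    ((∀ x : H, Coalgebra.comul (R := ℂ) (N x) =
        (TensorProduct.map N N) (Coalgebra.comul (R := ℂ) x)) ↔
      ((Coalgebra.counit (R := ℂ)) ∘ₗ N = Coalgebra.counit (R := ℂ)) ) ∧
    (((Coalgebra.counit (R := ℂ)) ∘ₗ N = Coalgebra.counit (R := ℂ)) ↔
      (∀ x : H, N x = S' (S' x))) := by
  -- S'∘S' is injective
  have hS'inj : Function.Injective (S' ∘ₗ S' : H →ₗ[ℂ] H) := by
    intro a b hab
    simp only [LinearMap.comp_apply] at hab
    have := congrArg (fun z => antipode (R := ℂ) (antipode (R := ℂ) z)) hab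
    simpa [hS'r] using this
  -- α = ε∘N implies N = S'²
  have key1 : ((Coalgebra.counit (R := ℂ)) ∘ₗ N = Coalgebra.counit (R := ℂ)) →
      ∀ x : H, N x = S' (S' x) := by
    intro hε x
    have := hNformula x
    rw [hε] at this
    rw [this, counit_comul_aux (S' ∘ₗ S') x]
    rfl
  -- N = S'² implies α = ε
  have key2 : (∀ x : H, N x = S' (S' x)) → 
      ((Coalgebra.counit (R := ℂ)) ∘ₗ N = Coalgebra.counit (R := ℂ)) := by
    intro hN
    -- from hΔN: S'²(lid (rTensor (ε∘N) Δx)) = N x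
    have step : ∀ x : H, (S' ∘ₗ S')
        (TensorProduct.lid ℂ H
          ((LinearMap.rTensor H ((Coalgebra.counit (R := ℂ)) ∘ₗ N))
            (Coalgebra.comul (R := ℂ) x))) = N x := by
      intro x
      have h1 := congrArg (fun t => TensorProduct.lid ℂ H
          (LinearMap.rTensor H (Coalgebra.counit (R := ℂ)) t)) (hΔN x)
      try simp only at h1
      rw [Coalgebra.rTensor_counit_comul] at h1
      have h2 : (LinearMap.rTensor H (Coalgebra.counit (R := ℂ)))
            ((TensorProduct.map N (S' ∘ₗ S')) (Coalgebra.comul (R := ℂ) x))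
          = (LinearMap.lTensor ℂ (S' ∘ₗ S'))
            ((LinearMap.rTensor H ((Coalgebra.counit (R := ℂ)) ∘ₗ N))
              (Coalgebra.comul (R := ℂ) x)) := by
        have : (LinearMap.rTensor H (Coalgebra.counit (R := ℂ))) ∘ₗ
              (TensorProduct.map N (S' ∘ₗ S'))
            = (LinearMap.lTensor ℂ (S' ∘ₗ S')) ∘ₗ
              (LinearMap.rTensor H ((Coalgebra.counit (R := ℂ)) ∘ₗ N)) := by
          rw [LinearMap.lTensor_comp_rTensor]
          ext a b
          simp
        exact LinearMap.congr_fun this _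
      rw [h2, lid_lTensor_aux] at h1
      simp only [lid_tmul, one_smul] at h1
      exact h1.symm
    ext x
    simp only [LinearMap.comp_apply]
    -- from step and N = S'², injectivity gives lid (rTensor (ε∘N) Δx) = x
    have hx : TensorProduct.lid ℂ H
        ((LinearMap.rTensor H ((Coalgebra.counit (R := ℂ)) ∘ₗ N))
          (Coalgebra.comul (R := ℂ) x)) = x := by
      apply hS'inj
      rw [step x]
      simp only [LinearMap.comp_apply]
      exact hN x
    have := counit_rTensor_aux ((Coalgebra.counit (R := ℂ)) ∘ₗ N) x
    rw [hx] at this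
    simpa using this.symm
  -- comultiplicativity implies N = S'²
  have key3 : (∀ x : H, Coalgebra.comul (R := ℂ) (N x) =
        (TensorProduct.map N N) (Coalgebra.comul (R := ℂ) x)) →
      ∀ x : H, N x = S' (S' x) := by
    intro hc x
    have heq : (TensorProduct.map N N) (Coalgebra.comul (R := ℂ) x)
        = (TensorProduct.map N (S' ∘ₗ S')) (Coalgebra.comul (R := ℂ) x) := by
      rw [← hc x, ← hΔN x]
    -- apply map E.symm id on the left leg
    set E := LinearEquiv.ofBijective N hNbij with hE
    have heq2 : (LinearMap.lTensor H N) (Coalgebra.comul (R := ℂ) x)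
        = (LinearMap.lTensor H (S' ∘ₗ S')) (Coalgebra.comul (R := ℂ) x) := by
      have h1 : ∀ f : H →ₗ[ℂ] H,
          (TensorProduct.map (E.symm : H →ₗ[ℂ] H) (LinearMap.id)) ∘ₗ
            (TensorProduct.map N f) = LinearMap.lTensor H f := by
        intro f
        rw [← TensorProduct.map_comp]
        have : (E.symm : H →ₗ[ℂ] H) ∘ₗ N = LinearMap.id := by
          ext a
          exact E.symm_apply_apply a
        rw [this, LinearMap.id_comp]
        rfl
      calc (LinearMap.lTensor H N) (Coalgebra.comul (R := ℂ) x)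
          = (TensorProduct.map (E.symm : H →ₗ[ℂ] H) (LinearMap.id))
              ((TensorProduct.map N N) (Coalgebra.comul (R := ℂ) x)) := by
            simpa using (LinearMap.congr_fun (h1 N) (Coalgebra.comul (R := ℂ) x)).symm
        _ = (TensorProduct.map (E.symm : H →ₗ[ℂ] H) (LinearMap.id))
              ((TensorProduct.map N (S' ∘ₗ S')) (Coalgebra.comul (R := ℂ) x)) := by
            rw [heq]
        _ = (LinearMap.lTensor H (S' ∘ₗ S')) (Coalgebra.comul (R := ℂ) x) := by
            simpa using LinearMap.congr_fun (h1 (S' ∘ₗ S')) (Coalgebra.comul (R := ℂ) x)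
    have h3 := congrArg (fun t => TensorProduct.lid ℂ H
        (LinearMap.rTensor H (Coalgebra.counit (R := ℂ)) t)) heq2
    try simp only at h3
    rw [counit_comul_aux N x, counit_comul_aux (S' ∘ₗ S') x] at h3
    simpa using h3
  refine ⟨⟨fun hc => key2 (key3 hc), fun hε x => ?_⟩, key1, key2⟩
  have hNS : (S' ∘ₗ S' : H →ₗ[ℂ] H) = N := by
    ext a; exact (key1 hε a).symm
  rw [hΔN x, hNS]
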